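/- Let n ∈ ℕ and let P be an n×n complex matrix that is unitary and satisfies P · conj(P) = 1 (where conj(P) denotes entrywise complex conjugation). Then there exists an orthonormal basis X_1, …, X_n of ℂ^n (with respect to the standard Hermitian inner product) such that P · conj(X_i) = X_i for every i. -/

import Mathlib

open Matrix

/-- Matrix form of Lemma 1 of the paper: if `P` is unitary and the antilinear PT operator
`ψ ↦ P ⬝ conj ψ` squares to the identity (`P ⬝ conj P = 1`), then there is an orthonormal
basis of `ℂ^n` consisting of PT-fixed vectors. -/
theorem stmt_1 (n : ℕ) (P : Matrix (Fin n) (Fin n) ℂ)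
    (hU : P * Pᴴ = 1)
    (hPT : P * P.map (starRingEnd ℂ) = 1) :
    ∃ X : OrthonormalBasis (Fin n) ℂ (EuclideanSpace ℂ (Fin n)),
      ∀ i, P.mulVec (star ((WithLp.equiv 2 (Fin n → ℂ)) (X i))) =
        (WithLp.equiv 2 (Fin n → ℂ)) (X i) := by
  classical
  set E := EuclideanSpace ℂ (Fin n) with hE
  have hPP : Pᴴ * P = 1 := mul_eq_one_comm.mp hU
  set f : E → E := fun v => WithLp.toLp 2 (P.mulVec (star (v : Fin n → ℂ)) : Fin n → ℂ) with hf
  have hconj : ∀ v : E, star (P.mulVec (star (v : Fin n → ℂ))) =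
      (P.map (starRingEnd ℂ)).mulVec (v : Fin n → ℂ) := by
    intro v
    funext i
    simp [mulVec, dotProduct, map_apply, star_sum, mul_comm]
  have hinvol : ∀ v, f (f v) = v := by
    intro v
    show WithLp.toLp 2 (P.mulVec (star (P.mulVec (star (v : Fin n → ℂ)))) : Fin n → ℂ) = v
    rw [hconj, mulVec_mulVec, hPT, one_mulVec]
  have hadd : ∀ u v, f (u + v) = f u + f v := by
    intro u v
    show WithLp.toLp 2 (P.mulVec (star ((u : Fin n → ℂ) + v)) : Fin n → ℂ) = _
    rw [star_add, mulVec_add]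
    rfl
  have hsmul : ∀ (c : ℂ) (v : E), f (c • v) = (starRingEnd ℂ c) • f v := by
    intro c v
    show WithLp.toLp 2 (P.mulVec (star (c • (v : Fin n → ℂ))) : Fin n → ℂ) = _
    rw [star_smul, mulVec_smul]
    rfl
  have hrsmul : ∀ (r : ℝ) (v : E), f (r • v) = r • f v := by
    intro r v
    rw [← algebraMap_smul ℂ r v, hsmul]
    simp only [Complex.coe_algebraMap, Complex.conj_ofReal]
    exact algebraMap_smul ℂ r (f v)
  have hsub : ∀ u v, f (u - v) = f u - f v := by
    intro u v
    have h := hadd (u - v) v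
    rw [sub_add_cancel] at h
    rw [eq_sub_iff_add_eq, ← h]
  -- antiunitarity
  have hinner : ∀ u v : E, (inner ℂ (f u) (f v) : ℂ) = inner ℂ v u := by
    intro u v
    rw [PiLp.inner_apply, PiLp.inner_apply]
    simp only [RCLike.inner_apply]
    have : ∑ i, (f v : Fin n → ℂ) i * (starRingEnd ℂ) ((f u : Fin n → ℂ) i)
        = star (P.mulVec (star (u : Fin n → ℂ))) ⬝ᵥ P.mulVec (star (v : Fin n → ℂ)) :=
      Finset.sum_congr rfl fun i _ => mul_comm _ _
    rw [this, star_mulVec, star_star, ← dotProduct_mulVec, mulVec_mulVec, hPP, one_mulVec]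
    simp [dotProduct, mul_comm]
  -- the fixed-point real subspace
  set V : Submodule ℝ E :=
    { carrier := {v | f v = v}
      add_mem' := by intro a b ha hb; simp only [Set.mem_setOf_eq] at *; rw [hadd, ha, hb]
      zero_mem' := by
        have h := hrsmul 0 0
        simp only [zero_smul] at h
        exact h
      smul_mem' := by intro r v hv; simp only [Set.mem_setOf_eq] at *; rw [hrsmul, hv] } with hV
  have memV : ∀ v : E, v ∈ V ↔ f v = v := fun v => Iff.rfl
  set J : E ≃ₗ[ℝ] E :=
    (LinearEquiv.smulOfNeZero ℂ E Complex.I Complex.I_ne_zero).restrictScalars ℝ with hJ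
  set W : Submodule ℝ E := V.map (J : E →ₗ[ℝ] E) with hW
  have hdimE : Module.finrank ℝ E = 2 * n := by
    rw [← Module.finrank_mul_finrank ℝ ℂ E, Complex.finrank_real_complex,
      finrank_euclideanSpace_fin]
  have hfsub : ∀ x : E, f (x - f x) = f x - x := by
    intro x
    rw [hsub, hinvol]
  have hsup : V ⊔ W = ⊤ := by
    rw [eq_top_iff]
    intro x _
    have hu : (2⁻¹ : ℝ) • (x + f x) ∈ V := by
      rw [memV, hrsmul, hadd, hinvol, add_comm]
    have hy : (2⁻¹ : ℝ) • ((-Complex.I) • (x - f x)) ∈ V := by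
      rw [memV, hrsmul, hsmul, hfsub]
      congr 1
      simp only [map_neg, Complex.conj_I, neg_neg]
      rw [neg_smul, ← smul_neg, neg_sub]
    have hxw : x - (2⁻¹ : ℝ) • (x + f x) ∈ W := by
      refine ⟨(2⁻¹ : ℝ) • ((-Complex.I) • (x - f x)), hy, ?_⟩
      show Complex.I • ((2⁻¹ : ℝ) • ((-Complex.I) • (x - f x))) = _
      rw [smul_comm, smul_smul]
      have : Complex.I * -Complex.I = 1 := by
        simp [Complex.I_mul_I]
      rw [this, one_smul]
      module
    have hx : x = (2⁻¹ : ℝ) • (x + f x) + (x - (2⁻¹ : ℝ) • (x + f x)) := by abel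
    rw [hx]
    exact Submodule.add_mem_sup hu hxw
  have hinf : V ⊓ W = ⊥ := by
    rw [eq_bot_iff]
    intro x hx
    have hxV : x ∈ V := hx.1
    obtain ⟨y, hyV, hxy⟩ := Submodule.mem_map.mp hx.2
    rw [memV] at hxV
    rw [memV] at hyV
    have hxy' : Complex.I • y = x := hxy
    rw [Submodule.mem_bot]
    have hfx : f x = -x := by
      rw [← hxy', hsmul, hyV, Complex.conj_I, neg_smul]
    rw [hxV] at hfx
    have : x + x = 0 := by
      nth_rewrite 1 [hfx]; abel
    have h2 : (2:ℝ) • x = 0 := by rw [two_smul]; exact this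
    have h3 := congrArg (fun z => (2⁻¹:ℝ) • z) h2
    simpa [smul_smul] using h3
  have hdimV : Module.finrank ℝ V = n := by
    have h1 := Submodule.finrank_sup_add_finrank_inf_eq V W
    rw [hsup, hinf, finrank_top, hdimE, finrank_bot] at h1
    have h2 : Module.finrank ℝ W = Module.finrank ℝ V := J.finrank_map_eq V
    omega
  have hreal : ∀ u v : E, (inner ℝ u v : ℝ) = (inner ℂ u v : ℂ).re := by
    intro u v
    rw [PiLp.inner_apply, PiLp.inner_apply, Complex.re_sum]
    rfl
  have hfixed_real : ∀ u v : E, u ∈ V → v ∈ V → (inner ℂ u v : ℂ) = ((inner ℝ u v : ℝ) : ℂ) := by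
    intro u v hu hv
    rw [memV] at hu hv
    have h1 : (inner ℂ u v : ℂ) = inner ℂ v u := by
      conv_lhs => rw [← hu, ← hv, hinner]
    have h2 : (starRingEnd ℂ) (inner ℂ u v : ℂ) = (inner ℂ u v : ℂ) :=
      (inner_conj_symm v u).trans h1.symm
    rw [hreal]
    exact (Complex.conj_eq_iff_re.mp h2).symm
  have bV := (stdOrthonormalBasis ℝ V).reindex (finCongr hdimV)
  set g : Fin n → E := fun i => (bV i : E) with hg
  have hgV : ∀ i, g i ∈ V := fun i => (bV i).2
  have horth : Orthonormal ℂ g := by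
    rw [orthonormal_iff_ite]
    intro i j
    rw [hfixed_real _ _ (hgV i) (hgV j)]
    have h3 := (orthonormal_iff_ite.mp bV.orthonormal) i j
    have hco : (inner ℝ (g i) (g j) : ℝ) = (inner ℝ (bV i) (bV j) : ℝ) := rfl
    rw [hco, h3]
    split <;> norm_num
  have hspan : ⊤ ≤ Submodule.span ℂ (Set.range g) := by
    rcases Nat.eq_zero_or_pos n with h0 | hpos
    · subst h0
      intro x _
      have hx0 : x = 0 := Subsingleton.elim x 0
      rw [hx0]; exact Submodule.zero_mem _
    · have : Nonempty (Fin n) := ⟨⟨0, hpos⟩⟩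
      rw [horth.linearIndependent.span_eq_top_of_card_eq_finrank]
      rw [Fintype.card_fin, finrank_euclideanSpace_fin]
  refine ⟨OrthonormalBasis.mk horth hspan, ?_⟩
  intro i
  have hXi : (OrthonormalBasis.mk horth hspan) i = g i := by
    rw [OrthonormalBasis.coe_mk]
  rw [hXi]
  exact congrArg WithLp.ofLp (hgV i)
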